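/- Let R > 0, r ∈ (0, R/2], γ ∈ (0, 1/r], and let Φ : [0,R] → ℝ be a nondecreasing function with Φ(0) = 1. Suppose there is a set Y_0 ⊆ [0,R−r] of Lebesgue measure zero such that for all t ∈ [0,R−r] \ Y_0, Φ(t+r) ≥ Φ(t) + γ·∫_0^t Φ(x) dx. Then, setting η = √(γ/((e−1)·r)), for all t ∈ [0,R] we have Φ(t) ≥ max(e^{η·t − 1}, 1); in particular Φ(R) ≥ e^{η·R − 1}. -/

import Mathlib

open MeasureTheory intervalIntegral Filter

/-- convexity bound: `exp x ≤ 1 + (e-1) x` on `[0,1]`. -/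
lemma exp_le_linear_aux {x : ℝ} (hx0 : 0 ≤ x) (hx1 : x ≤ 1) :
    Real.exp x ≤ 1 + (Real.exp 1 - 1) * x := by
  have h := convexOn_exp.2 (Set.mem_univ (0 : ℝ)) (Set.mem_univ (1 : ℝ))
    (by linarith : (0:ℝ) ≤ 1 - x) hx0 (by ring)
  simp only [smul_eq_mul, mul_zero, mul_one, zero_add, Real.exp_zero] at h
  nlinarith [h]

set_option maxHeartbeats 2000000 in
/-- Let `R > 0`, `r ∈ (0,R/2]`, `γ ∈ (0,1/r]`, and let `Φ : [0,R] → ℝ`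
be nondecreasing with `Φ(0) = 1`. Suppose there is a measure-zero set `Y₀ ⊆ [0,R−r]`
such that for all `t ∈ [0,R−r] \ Y₀`, `Φ(t+r) ≥ Φ(t) + γ ∫_0^t Φ(x) dx`.
Then, with `η = √(γ/((e−1)r))`, for all `t ∈ [0,R]` we have
`Φ(t) ≥ max(e^{η t − 1}, 1)`; in particular `Φ(R) ≥ e^{η R − 1}`. -/
theorem stmt10 (R r γ : ℝ) (hR : 0 < R) (hr : r ∈ Set.Ioc 0 (R / 2))
    (hγ : γ ∈ Set.Ioc 0 (1 / r))
    (Φ : ℝ → ℝ) (hmono : MonotoneOn Φ (Set.Icc 0 R)) (h0 : Φ 0 = 1)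
    (Y0 : Set ℝ) (hY0sub : Y0 ⊆ Set.Icc 0 (R - r)) (hY0 : MeasureTheory.volume Y0 = 0)
    (hineq : ∀ t ∈ Set.Icc 0 (R - r) \ Y0,
      Φ t + γ * ∫ x in (0 : ℝ)..t, Φ x ≤ Φ (t + r)) :
    (∀ t ∈ Set.Icc 0 R,
        max (Real.exp (Real.sqrt (γ / ((Real.exp 1 - 1) * r)) * t - 1)) 1 ≤ Φ t) ∧
      Real.exp (Real.sqrt (γ / ((Real.exp 1 - 1) * r)) * R - 1) ≤ Φ R := by
  obtain ⟨hr0, hrR⟩ := hr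
  obtain ⟨hγ0, hγr⟩ := hγ
  have he2 : (2:ℝ) < Real.exp 1 := by
    have := Real.exp_one_gt_d9; linarith
  have he0 : (0:ℝ) < Real.exp 1 - 1 := by linarith
  set η := Real.sqrt (γ / ((Real.exp 1 - 1) * r)) with hηdef
  have hη0 : 0 < η := Real.sqrt_pos.mpr (by positivity)
  have hηsq : η ^ 2 = γ / ((Real.exp 1 - 1) * r) := Real.sq_sqrt (by positivity)
  have hγeq : γ = (Real.exp 1 - 1) * r * η ^ 2 := by
    rw [hηsq]; field_simp
  have hηr1 : η * r ≤ 1 := by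
    have h1 : (Real.exp 1 - 1) * r * η ^ 2 ≤ 1 / r := hγeq ▸ hγr
    have h2 : (Real.exp 1 - 1) * (η * r) ^ 2 ≤ 1 := by
      have h3 := mul_le_mul_of_nonneg_right h1 hr0.le
      rw [one_div, inv_mul_cancel₀ hr0.ne'] at h3
      nlinarith
    nlinarith [h2, mul_pos hη0 hr0, sq_nonneg (η * r - 1)]
  -- the comparison function
  set g : ℝ → ℝ := fun x => max (Real.exp (η * x - 1)) 1 with hgdef
  have hgcont : Continuous g := by
    apply Continuous.max _ continuous_const
    exact (Continuous.sub (continuous_const.mul continuous_id) continuous_const).rexp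
  have hgint : ∀ a b : ℝ, IntervalIntegrable g volume a b :=
    fun a b => hgcont.intervalIntegrable a b
  have hg1 : ∀ x, 1 ≤ g x := fun x => le_max_right _ _
  -- value of the integral of exp (η x - 1)
  have hexpint : ∀ a b : ℝ, (∫ x in a..b, Real.exp (η * x - 1))
      = (Real.exp (η * b - 1) - Real.exp (η * a - 1)) / η := by
    intro a b
    have hd : ∀ x : ℝ, HasDerivAt (fun y => Real.exp (η * y - 1) / η)
        (Real.exp (η * x - 1)) x := by
      intro x
      have h1 : HasDerivAt (fun y : ℝ => η * y - 1) (η * 1) x :=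
        ((hasDerivAt_id x).const_mul η).sub_const 1
      have h2 := (h1.exp).div_const η
      rw [mul_one, mul_div_cancel_right₀ _ hη0.ne'] at h2
      exact h2
    rw [intervalIntegral.integral_eq_sub_of_hasDerivAt (fun x _ => hd x)
      ((Continuous.sub (continuous_const.mul continuous_id) continuous_const).rexp.intervalIntegrable a b)]
    ring
  have hΦ1 : ∀ t ∈ Set.Icc (0:ℝ) R, 1 ≤ Φ t := by
    intro t ht
    calc (1:ℝ) = Φ 0 := h0.symm
    _ ≤ Φ t := hmono ⟨le_rfl, hR.le⟩ ht ht.1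
  -- continuity of the "F" functional
  have hFcont : Continuous (fun s => g s + γ * ∫ x in (0:ℝ)..s, g x) :=
    hgcont.add (continuous_const.mul
      (intervalIntegral.continuous_primitive hgint 0))
  -- main induction
  have key : ∀ n : ℕ, ∀ t ∈ Set.Icc 0 R, t ≤ n * r → g t ≤ Φ t := by
    intro n
    induction n with
    | zero =>
      intro t ht ht0
      have htz : t = 0 := le_antisymm (by simpa using ht0) ht.1
      subst htz
      have : Real.exp (η * 0 - 1) ≤ 1 := by
        rw [Real.exp_le_one_iff]; linarith
      simp only [hgdef, h0]
      exact max_le this le_rfl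
    | succ n ih =>
      intro t ht htn
      by_cases hcase : η * t ≤ 1
      · have h1 : Real.exp (η * t - 1) ≤ 1 := by
          rw [Real.exp_le_one_iff]; linarith
        exact max_le (h1.trans (hΦ1 t ht)) (hΦ1 t ht)
      · push_neg at hcase
        have hrt : r < t := by
          have : η * r ≤ 1 := hηr1
          nlinarith
        set s := t - r with hsdef
        have hs0 : 0 < s := by simp [hsdef]; linarith
        have hsR : s ≤ R - r := by simp [hsdef]; linarith [ht.2]
        have hsn : s ≤ n * r := by
          simp only [hsdef]
          push_cast at htn
          linarith
        -- Step 1: for good u < s, F u ≤ Φ t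
        have step1 : ∀ u, 0 ≤ u → u < s → u ∉ Y0 →
            g u + γ * ∫ x in (0:ℝ)..u, g x ≤ Φ t := by
          intro u hu0 hus huY
          have huIcc : u ∈ Set.Icc 0 (R - r) := ⟨hu0, by linarith⟩
          have hin := hineq u ⟨huIcc, huY⟩
          have hint : (∫ x in (0:ℝ)..u, g x) ≤ ∫ x in (0:ℝ)..u, Φ x := by
            apply intervalIntegral.integral_mono_on hu0 (hgint 0 u)
            · apply MonotoneOn.intervalIntegrable
              apply hmono.mono
              rw [Set.uIcc_of_le hu0]
              exact Set.Icc_subset_Icc le_rfl (by linarith)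
            · intro x hx
              exact ih x ⟨hx.1, by linarith [hx.2]⟩ (by linarith [hx.2])
          have hgu : g u ≤ Φ u := ih u ⟨hu0, by linarith⟩ (by linarith)
          have hmon : Φ (u + r) ≤ Φ t :=
            hmono ⟨by linarith, by linarith⟩ ht (by linarith)
          nlinarith [hin]
        -- Step 2: pass to the limit u → s⁻ : F s ≤ Φ t
        have step2 : g s + γ * ∫ x in (0:ℝ)..s, g x ≤ Φ t := by
          have hdense : ∀ n : ℕ, ∃ u, u ∈ Set.Ioo (max 0 (s - 1/(n+1))) s ∧ u ∉ Y0 := by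
            intro m
            have hlt : max 0 (s - 1/(m+1)) < s := by
              apply max_lt hs0
              have : (0:ℝ) < 1/(m+1) := by positivity
              linarith
            by_contra h
            push_neg at h
            have hsub : Set.Ioo (max 0 (s - 1/(m+1))) s ⊆ Y0 := by
              intro x hx
              by_contra hxY
              exact hxY (h x hx)
            have := measure_mono (μ := volume) hsub
            rw [hY0, Real.volume_Ioo] at this
            simp only [nonpos_iff_eq_zero, ENNReal.ofReal_eq_zero] at this
            linarith
          choose u hu huY using hdense
          have hulb : ∀ m : ℕ, s - 1/(m+1) ≤ u m := fun m =>
            le_of_lt (lt_of_le_of_lt (le_max_right _ _) (hu m).1)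
          have huub : ∀ m : ℕ, u m ≤ s := fun m => le_of_lt (hu m).2
          have hu0 : ∀ m : ℕ, 0 ≤ u m := fun m =>
            le_of_lt (lt_of_le_of_lt (le_max_left _ _) (hu m).1)
          have htend : Tendsto u atTop (nhds s) := by
            apply tendsto_of_tendsto_of_tendsto_of_le_of_le
              (g := fun m : ℕ => s - 1/(m+1)) (h := fun _ : ℕ => s)
              _ tendsto_const_nhds hulb huub
            have h1 : Tendsto (fun m : ℕ => 1/((m:ℝ)+1)) atTop (nhds 0) :=
              tendsto_one_div_add_atTop_nhds_zero_nat
            have := tendsto_const_nhds (x := s) (f := atTop (α := ℕ)) |>.sub h1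
            simpa using this
          have hFtend : Tendsto (fun m => g (u m) + γ * ∫ x in (0:ℝ)..(u m), g x)
              atTop (nhds (g s + γ * ∫ x in (0:ℝ)..s, g x)) :=
            (hFcont.tendsto s).comp htend
          exact le_of_tendsto hFtend
            (Eventually.of_forall fun m => step1 (u m) (hu0 m) (hu m).2 (huY m))
        -- Step 3: g t ≤ F s
        have hgt : g t = Real.exp (η * t - 1) := by
          apply max_eq_left
          rw [Real.one_le_exp_iff]; linarith
        rw [hgt]
        refine le_trans ?_ step2
        have hts : η * t = η * s + η * r := by rw [hsdef]; ring
        by_cases hcs : η * s ≤ 1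
        -- Case B: s ≤ 1/η
        · have hintlb : s ≤ ∫ x in (0:ℝ)..s, g x := by
            calc s = ∫ _x in (0:ℝ)..s, (1:ℝ) := by simp
            _ ≤ ∫ x in (0:ℝ)..s, g x := by
              apply intervalIntegral.integral_mono_on hs0.le
                (intervalIntegrable_const) (hgint 0 s)
              intro x _; exact hg1 x
          have hx1 : η * t - 1 ≤ 1 := by nlinarith
          have hexp := exp_le_linear_aux (x := η * t - 1) (by linarith) hx1
          have harith : 1 + (Real.exp 1 - 1) * (η * t - 1) ≤ 1 + γ * s := by
            have : γ * s = (Real.exp 1 - 1) * (η * r) * (η * s) := by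
              rw [hγeq]; ring
            rw [this]
            have hkey : η * t - 1 ≤ (η * r) * (η * s) := by
              nlinarith [mul_nonneg (sub_nonneg.mpr hηr1) (sub_nonneg.mpr hcs)]
            nlinarith
          have := hg1 s
          nlinarith
        -- Case A: s ≥ 1/η
        · push_neg at hcs
          have hηinv : 1/η ≤ s := by
            rw [div_le_iff₀ hη0]; nlinarith
          have hintlb : Real.exp (η * s - 1) / η ≤ ∫ x in (0:ℝ)..s, g x := by
            rw [← intervalIntegral.integral_add_adjacent_intervals
              (hgint 0 (1/η)) (hgint (1/η) s)]
            have h1 : 1/η ≤ ∫ x in (0:ℝ)..(1/η), g x := by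
              calc 1/η = ∫ _x in (0:ℝ)..(1/η), (1:ℝ) := by simp
              _ ≤ _ := by
                apply intervalIntegral.integral_mono_on (by positivity)
                  (intervalIntegrable_const) (hgint 0 (1/η))
                intro x _; exact hg1 x
            have h2 : (Real.exp (η * s - 1) - 1) / η ≤ ∫ x in (1/η)..s, g x := by
              have heq : (∫ x in (1/η)..s, Real.exp (η * x - 1))
                  = (Real.exp (η * s - 1) - 1) / η := by
                rw [hexpint]
                have : η * (1/η) - 1 = 0 := by field_simp; norm_num
                rw [this, Real.exp_zero]
              rw [← heq]
              apply intervalIntegral.integral_mono_on hηinv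
                (((Continuous.sub (continuous_const.mul continuous_id)
                  continuous_const).rexp).intervalIntegrable _ _) (hgint _ _)
              intro x _; exact le_max_left _ _
            have : Real.exp (η * s - 1) / η = 1/η + (Real.exp (η * s - 1) - 1) / η := by
              ring
            linarith
          have hgs : Real.exp (η * s - 1) ≤ g s := le_max_left _ _
          have hexpr : Real.exp (η * r) ≤ 1 + (Real.exp 1 - 1) * (η * r) :=
            exp_le_linear_aux (by positivity) hηr1
          have hsplit : Real.exp (η * t - 1) = Real.exp (η * s - 1) * Real.exp (η * r) := by
            rw [← Real.exp_add]; congr 1; linarith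
          have hγint : γ * (Real.exp (η * s - 1) / η)
              = (Real.exp 1 - 1) * (η * r) * Real.exp (η * s - 1) := by
            rw [hγeq]; field_simp
          have hes : 0 < Real.exp (η * s - 1) := Real.exp_pos _
          have h3 : γ * (Real.exp (η * s - 1) / η) ≤ γ * ∫ x in (0:ℝ)..s, g x :=
            mul_le_mul_of_nonneg_left hintlb hγ0.le
          rw [hsplit]
          nlinarith
  -- conclude
  have main : ∀ t ∈ Set.Icc (0:ℝ) R, g t ≤ Φ t := by
    intro t ht
    apply key (⌈R / r⌉₊) t ht
    calc t ≤ R := ht.2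
    _ = (R / r) * r := by field_simp
    _ ≤ (⌈R / r⌉₊ : ℝ) * r := by
      apply mul_le_mul_of_nonneg_right (Nat.le_ceil _) hr0.le
  refine ⟨main, ?_⟩
  exact le_trans (le_max_left _ _) (main R ⟨hR.le, le_rfl⟩)
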